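/- For an opinion vector y in an SBC or SBI system with fvct(y) = lim_{t→∞} A(y)^t y, if G_r(y) = G_r(fvct(y)), then in any weakly connected component of G_r(fvct(y)) the agent attaining the minimum opinion value of fvct(y) in that component, as well as the agent attaining the maximum, must belong to a sink strongly connected component (closed-minded component). -/

import Mathlib

open Filter Matrix Finset

/-- Averaging adjacency matrix of the proximity digraph with bound function `B`
(`B i j = r i` for SBC, `B i j = r j` for SBI). -/
noncomputable def adjMat {n : ℕ} (B : Fin n → Fin n → ℝ) (y : Fin n → ℝ) :
    Matrix (Fin n) (Fin n) ℝ :=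
  Matrix.of fun i j =>
    if |y i - y j| ≤ B i j
    then ((Finset.univ.filter (fun k => |y i - y k| ≤ B i k)).card : ℝ)⁻¹
    else 0

/-- If `fvct y = lim A(y)^t y` and `G_r(y) = G_r(fvct y)`, then in any
weakly connected component of `G_r(fvct y)`, the agents attaining the minimum and
the maximum value of `fvct y` on that component lie in a sink strongly connected
component (i.e. every node they reach, reaches them back). -/
theorem stmt5 {n : ℕ} (r : Fin n → ℝ) (B : Fin n → Fin n → ℝ) (y f : Fin n → ℝ)
    (hr : ∀ i, 0 < r i)
    (hB : (∀ i j, B i j = r i) ∨ (∀ i j, B i j = r j))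
    (hf : ∀ i, Tendsto (fun t => ((adjMat B y ^ t) *ᵥ y) i) atTop (nhds (f i)))
    (hG : ∀ i j, (|y i - y j| ≤ B i j) ↔ (|f i - f j| ≤ B i j))
    (i0 i1 : Fin n)
    (hmin : ∀ j, Relation.ReflTransGen
        (fun a b => |f a - f b| ≤ B a b ∨ |f b - f a| ≤ B b a) i0 j → f i0 ≤ f j)
    (hmax : ∀ j, Relation.ReflTransGen
        (fun a b => |f a - f b| ≤ B a b ∨ |f b - f a| ≤ B b a) i1 j → f j ≤ f i1) :
    (∀ k, Relation.ReflTransGen (fun a b => |f a - f b| ≤ B a b) i0 k →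
        Relation.ReflTransGen (fun a b => |f a - f b| ≤ B a b) k i0) ∧
    (∀ k, Relation.ReflTransGen (fun a b => |f a - f b| ≤ B a b) i1 k →
        Relation.ReflTransGen (fun a b => |f a - f b| ≤ B a b) k i1) := by
  -- positivity of bounds
  have hBpos : ∀ i j, 0 < B i j := by
    rcases hB with h | h <;> intro i j <;> rw [h] <;> exact hr _
  -- self-loops
  have hself : ∀ i, |f i - f i| ≤ B i i := by
    intro i; simp [(hBpos i i).le]
  -- the matrices agree
  have hAeq : adjMat B y = adjMat B f := by
    ext i j
    have h2 : (Finset.univ.filter (fun k => |y i - y k| ≤ B i k)) =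
        (Finset.univ.filter (fun k => |f i - f k| ≤ B i k)) :=
      Finset.filter_congr (fun k _ => by simp [hG i k])
    simp only [adjMat, Matrix.of_apply, h2, hG i j]
  -- f is a fixed point of the matrix
  have hfix : (adjMat B f) *ᵥ f = f := by
    funext i
    have h1 : Tendsto (fun t => ((adjMat B y ^ (t+1)) *ᵥ y) i) atTop (nhds (f i)) :=
      (hf i).comp (tendsto_add_atTop_nat 1)
    have h2 : ∀ t : ℕ, ((adjMat B y ^ (t+1)) *ᵥ y) i
        = ∑ j, adjMat B f i j * ((adjMat B y ^ t) *ᵥ y) j := by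
      intro t
      rw [pow_succ', ← Matrix.mulVec_mulVec, ← hAeq]
      rfl
    have h3 : Tendsto (fun t => ∑ j, adjMat B f i j * ((adjMat B y ^ t) *ᵥ y) j)
        atTop (nhds (∑ j, adjMat B f i j * f j)) :=
      tendsto_finset_sum _ (fun j _ => (hf j).const_mul _)
    have h4 : ((adjMat B f) *ᵥ f) i = ∑ j, adjMat B f i j * f j := rfl
    rw [h4]
    exact tendsto_nhds_unique h3 (by simpa only [h2] using h1)
  -- averaging: the deviation sum over the out-neighborhood vanishes
  have hsum0 : ∀ i, ∑ k ∈ Finset.univ.filter (fun k => |f i - f k| ≤ B i k),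
      (f k - f i) = 0 := by
    intro i
    set N := Finset.univ.filter (fun k => |f i - f k| ≤ B i k) with hN
    have hiN : i ∈ N := by simp [hN]; exact (hBpos i i).le
    have hcard : 0 < N.card := Finset.card_pos.mpr ⟨i, hiN⟩
    have hcR : ((N.card : ℝ)) ≠ 0 := by positivity
    have hfx : ∑ j, adjMat B f i j * f j = f i := congrFun hfix i
    have hfx2 : ∑ j ∈ N, ((N.card : ℝ))⁻¹ * f j = f i := by
      rw [← hfx]
      rw [Finset.sum_filter]
      apply Finset.sum_congr rfl
      intro j _
      by_cases hj : |f i - f j| ≤ B i j <;> simp [adjMat, hj, hN]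
    have hfx3 : ∑ j ∈ N, f j = (N.card : ℝ) * f i := by
      rw [← Finset.mul_sum] at hfx2
      field_simp at hfx2
      linarith [hfx2]
    rw [Finset.sum_sub_distrib, hfx3]
    simp [mul_comm]
  -- general lemma: an extremal agent (for ≤ or ≥) on its weak component
  -- has all out-neighbors at its own value
  have key : ∀ (i j : Fin n), |f i - f j| ≤ B i j →
      (∀ k, |f i - f k| ≤ B i k → f i ≤ f k) → f j = f i := by
    intro i j hj hlow
    have := (Finset.sum_eq_zero_iff_of_nonneg (by
      intro k hk
      simp only [Finset.mem_filter] at hk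
      linarith [hlow k hk.2])).mp (hsum0 i)
    have hjmem : j ∈ Finset.univ.filter (fun k => |f i - f k| ≤ B i k) := by simp [hj]
    linarith [this j hjmem]
  have key' : ∀ (i j : Fin n), |f i - f j| ≤ B i j →
      (∀ k, |f i - f k| ≤ B i k → f k ≤ f i) → f j = f i := by
    intro i j hj hhigh
    have := (Finset.sum_eq_zero_iff_of_nonpos (by
      intro k hk
      simp only [Finset.mem_filter] at hk
      linarith [hhigh k hk.2])).mp (hsum0 i)
    have hjmem : j ∈ Finset.univ.filter (fun k => |f i - f k| ≤ B i k) := by simp [hj]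
    linarith [this j hjmem]
  set R := fun a b => |f a - f b| ≤ B a b with hR
  set Rs := fun a b => |f a - f b| ≤ B a b ∨ |f b - f a| ≤ B b a with hRs
  have embed : ∀ a b, Relation.ReflTransGen R a b → Relation.ReflTransGen Rs a b :=
    fun a b h => Relation.ReflTransGen.mono (fun x y hxy => Or.inl hxy) a b h
  constructor
  · -- minimum
    have const : ∀ k, Relation.ReflTransGen R i0 k → f k = f i0 := by
      intro k hk
      induction hk with
      | refl => rfl
      | tail h1 h2 ih =>
        rename_i b c
        have : f c = f b := key b c h2 (by
          intro j hbj
          have : f i0 ≤ f j := hmin j ((embed _ _ h1).tail (Or.inl hbj))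
          rw [ih]; linarith)
        rw [this, ih]
    intro k hk
    exact Relation.ReflTransGen.single (show R k i0 by
      simp only [hR]; rw [const k hk]; simpa using (hBpos k i0).le)
  · -- maximum
    have const : ∀ k, Relation.ReflTransGen R i1 k → f k = f i1 := by
      intro k hk
      induction hk with
      | refl => rfl
      | tail h1 h2 ih =>
        rename_i b c
        have : f c = f b := key' b c h2 (by
          intro j hbj
          have : f j ≤ f i1 := hmax j ((embed _ _ h1).tail (Or.inl hbj))
          rw [ih]; linarith)
        rw [this, ih]
    intro k hk
    exact Relation.ReflTransGen.single (show R k i1 by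
      simp only [hR]; rw [const k hk]; simpa using (hBpos k i1).le)
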